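/- Let Φ : ℝ^d → ℝ ∪ {+∞} be a proper convex function whose domain has diameter at most D, i.e., ‖x − z‖ ≤ D for all x, z ∈ dom Φ. Let ρ ≥ 0 and Φ̃ = Φ + (ρ/2)‖·‖². Then for any ε ≥ 0, x ∈ dom Φ, and y ∈ ∂_ε Φ̃(x), one has y − ρx ∈ ∂_{ε'} Φ(x), where ε' = D·sqrt(2ρε) if ε ≤ ρD²/2, and ε' = ρD²/2 + ε otherwise. -/

import Mathlib

open RealInnerProductSpace

noncomputable section

/-- Euclidean space `ℝ^d`. -/
abbrev E (d : ℕ) := EuclideanSpace ℝ (Fin d)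

/-- Convexity for extended-real-valued functions `ℝ^d → ℝ ∪ {+∞}` (modelled in `EReal`). -/
def ERealConvex {d : ℕ} (f : E d → EReal) : Prop :=
  ∀ x y : E d, ∀ t : ℝ, 0 ≤ t → t ≤ 1 →
    f ((1 - t) • x + t • y) ≤ ((1 - t : ℝ) : EReal) * f x + (t : EReal) * f y

/-- A proper function: never `−∞` and not identically `+∞`. -/
def ERealProper {d : ℕ} (f : E d → EReal) : Prop :=
  (∀ x, f x ≠ ⊥) ∧ (∃ x, f x ≠ ⊤)

/-- The ε-subdifferential of `f` at `x`: the set of `y` such that `f x` is finite and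
`f z ≥ f x + ⟨y, z − x⟩ − ε` for all `z`. -/
def epsSubdiff {d : ℕ} (f : E d → EReal) (ε : ℝ) (x : E d) : Set (E d) :=
  {y | (∃ r : ℝ, f x = (r : EReal)) ∧
    ∀ z : E d, f x + ((⟪y, z - x⟫ - ε : ℝ) : EReal) ≤ f z}

lemma key_real (A B ε D ρ : ℝ) (hρ : 0 ≤ ρ) (hD : 0 ≤ D) (hε : 0 ≤ ε)
    (h : ∀ t : ℝ, 0 < t → t ≤ 1 → t * A ≤ t * B + ε + (ρ * D ^ 2 / 2) * t ^ 2) :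
    A ≤ B + (if ε ≤ ρ * D ^ 2 / 2 then D * Real.sqrt (2 * ρ * ε) else ρ * D ^ 2 / 2 + ε) := by
  set K := ρ * D ^ 2 / 2 with hK
  have hK0 : 0 ≤ K := by positivity
  split_ifs with hcase
  · rcases eq_or_lt_of_le hε with hε0 | hε0
    · rw [← hε0, mul_zero, Real.sqrt_zero, mul_zero, add_zero]
      by_contra hAB
      push_neg at hAB
      rcases eq_or_lt_of_le hK0 with hK0' | hK0'
      · have := h 1 one_pos le_rfl
        rw [← hε0, ← hK0'] at this
        linarith
      · set t := min 1 ((A - B) / (2 * K)) with ht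
        have htpos : 0 < t := lt_min one_pos (div_pos (by linarith) (by linarith))
        have ht1 : t ≤ 1 := min_le_left _ _
        have := h t htpos ht1
        rw [← hε0] at this
        have h2 : K * t ≤ (A - B) / 2 := by
          have hle : t ≤ (A - B) / (2 * K) := min_le_right _ _
          have : K * t ≤ K * ((A - B) / (2 * K)) := by nlinarith
          have heq : K * ((A - B) / (2 * K)) = (A - B) / 2 := by
            field_simp
          linarith
        nlinarith
    · have hKpos : 0 < K := lt_of_lt_of_le hε0 hcase
      set S := D * Real.sqrt (2 * ρ * ε) with hSdef
      have hS0 : 0 ≤ S := by positivity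
      have hS2 : S ^ 2 = 4 * ε * K := by
        rw [hSdef, mul_pow, Real.sq_sqrt (by positivity)]
        rw [hK]; ring
      set t := Real.sqrt (ε / K) with ht
      have htpos : 0 < t := Real.sqrt_pos.mpr (by positivity)
      have ht2 : t ^ 2 = ε / K := Real.sq_sqrt (by positivity)
      have ht1 : t ≤ 1 := by
        rw [ht]
        exact Real.sqrt_le_one.mpr ((div_le_one hKpos).mpr hcase)
      have hmain := h t htpos ht1
      have hKt2 : K * t ^ 2 = ε := by rw [ht2]; field_simp
      have htS : t * S = 2 * ε := by
        have h1 : Real.sqrt (4 * ε * K) = S := by rw [← hS2, Real.sqrt_sq hS0]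
        rw [ht, ← h1, ← Real.sqrt_mul (le_of_lt (div_pos hε0 hKpos))]
        have : ε / K * (4 * ε * K) = (2 * ε) ^ 2 := by field_simp; ring
        rw [this, Real.sqrt_sq (by linarith)]
      have hfin : t * A ≤ t * (B + S) := by
        rw [mul_add, htS]; linarith
      exact le_of_mul_le_mul_left hfin htpos
  · have := h 1 one_pos le_rfl
    nlinarith


/-- Let `Φ` be proper convex with domain of diameter at most `D`,
`ρ ≥ 0`, and `Φ̃ = Φ + (ρ/2)‖·‖²`. For any `ε ≥ 0`, `x ∈ dom Φ` and `y ∈ ∂_ε Φ̃(x)`,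
one has `y − ρx ∈ ∂_{ε'} Φ(x)`, where `ε' = D√(2ρε)` if `ε ≤ ρD²/2` and
`ε' = ρD²/2 + ε` otherwise. -/
theorem stmt8 {d : ℕ} (Φ : E d → EReal)
    (hproper : ERealProper Φ) (hconvex : ERealConvex Φ)
    (D : ℝ) (hD : ∀ x z : E d, Φ x ≠ ⊤ → Φ z ≠ ⊤ → ‖x - z‖ ≤ D)
    (ρ : ℝ) (hρ : 0 ≤ ρ) (ε : ℝ) (hε : 0 ≤ ε)
    (x : E d) (hx : Φ x ≠ ⊤) (y : E d)
    (hy : y ∈ epsSubdiff (fun z => Φ z + (((ρ / 2) * ‖z‖ ^ 2 : ℝ) : EReal)) ε x) :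
    y - ρ • x ∈ epsSubdiff Φ
      (if ε ≤ ρ * D ^ 2 / 2 then D * Real.sqrt (2 * ρ * ε) else ρ * D ^ 2 / 2 + ε) x := by
  have hbot := hproper.1
  have hD0 : 0 ≤ D := by
    have := hD x x hx hx
    simpa using this
  set px := (Φ x).toReal with hpxdef
  have hpx : Φ x = (px : EReal) := (EReal.coe_toReal hx (hbot x)).symm
  obtain ⟨-, hineq⟩ := hy
  refine ⟨⟨px, hpx⟩, fun z => ?_⟩
  by_cases hz : Φ z = ⊤
  · rw [hz]; exact le_top
  set pz := (Φ z).toReal with hpzdef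
  have hpz : Φ z = (pz : EReal) := (EReal.coe_toReal hz (hbot z)).symm
  have hzx : ‖z - x‖ ≤ D := hD z x hz hx
  have hzx2 : ‖z - x‖ ^ 2 ≤ D ^ 2 := by nlinarith [norm_nonneg (z - x)]
  -- the key scaled inequality
  have hA : ∀ t : ℝ, 0 < t → t ≤ 1 →
      t * ⟪y - ρ • x, z - x⟫ ≤ t * (pz - px) + ε + (ρ * D ^ 2 / 2) * t ^ 2 := by
    intro t htpos ht1
    set w := x + t • (z - x) with hwdef
    have h1 := hineq w
    simp only at h1
    have hw : (1 - t) • x + t • z = w := by rw [hwdef]; module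
    have h2 := hconvex x z t htpos.le ht1
    rw [hw, hpx, hpz] at h2
    have h3 : Φ w + (((ρ / 2) * ‖w‖ ^ 2 : ℝ) : EReal)
        ≤ ((((1 - t) * px + t * pz) + (ρ / 2) * ‖w‖ ^ 2 : ℝ) : EReal) := by
      calc Φ w + (((ρ / 2) * ‖w‖ ^ 2 : ℝ) : EReal)
          ≤ (((1 - t : ℝ) : EReal) * px + (t : EReal) * pz) + (((ρ / 2) * ‖w‖ ^ 2 : ℝ) : EReal) :=
            add_le_add h2 le_rfl
        _ = ((((1 - t) * px + t * pz) + (ρ / 2) * ‖w‖ ^ 2 : ℝ) : EReal) := by norm_cast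
    rw [hpx] at h1
    have h4 : (((px + (ρ / 2) * ‖x‖ ^ 2) + (⟪y, w - x⟫ - ε) : ℝ) : EReal)
        ≤ ((((1 - t) * px + t * pz) + (ρ / 2) * ‖w‖ ^ 2 : ℝ) : EReal) := by
      refine le_trans ?_ (le_trans h1 h3)
      norm_cast
    rw [EReal.coe_le_coe_iff] at h4
    -- expand the geometry
    have hwx : w - x = t • (z - x) := by rw [hwdef]; module
    have hiy : ⟪y, w - x⟫ = t * ⟪y, z - x⟫ := by rw [hwx, real_inner_smul_right]
    have hnw : ‖w‖ ^ 2 = ‖x‖ ^ 2 + 2 * (t * ⟪x, z - x⟫) + t ^ 2 * ‖z - x‖ ^ 2 := by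
      rw [hwdef, norm_add_sq_real, real_inner_smul_right, norm_smul,
        Real.norm_eq_abs, mul_pow, sq_abs]
    have hisub : ⟪y - ρ • x, z - x⟫ = ⟪y, z - x⟫ - ρ * ⟪x, z - x⟫ := by
      rw [inner_sub_left, real_inner_smul_left]
    rw [hiy, hnw] at h4
    rw [hisub]
    nlinarith [sq_nonneg t, mul_nonneg hρ (sq_nonneg t)]
  have hkey := key_real (⟪y - ρ • x, z - x⟫) (pz - px) ε D ρ hρ hD0 hε hA
  rw [hpx, hpz]
  norm_cast
  linarith
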